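/- Let D ⊂ ℝ^q be nonempty and x ∈ ℝ^n. The value function V is calm at x with penalty threshold λ if and only if inf_{y∈Y} [ g(x,y) + λ·dist(H(x,y), D) ] = inf_{y∈Y} { g(x,y) | H(x,y) ∈ D }. -/

import Mathlib

open Filter Topology Metric Set

attribute [local instance] Classical.propDecidable

noncomputable section

/-- `ℝ^n` with the Euclidean norm. -/
abbrev Rn (n : ℕ) : Type := EuclideanSpace ℝ (Fin n)

variable {n m : ℕ} {Q : Type*} [NormedAddCommGroup Q]

/-- `(x, y)` is feasible in the bilevel problem (P): `x ∈ X` and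
`y ∈ τ-argmin_{z ∈ Y} { g(x,z) | H(x,z) ∈ D }`. -/
def PFeas (X : Set (Rn n)) (Y : Set (Rn m)) (D : Set Q)
    (g : Rn n × Rn m → ℝ) (H : Rn n × Rn m → Q) (τ : ℝ)
    (x : Rn n) (y : Rn m) : Prop :=
  x ∈ X ∧ y ∈ Y ∧ H (x, y) ∈ D ∧
    ∀ z ∈ Y, H (x, z) ∈ D → g (x, y) ≤ g (x, z) + τ

/-- The minimum value `𝔪` of (P). -/
def PVal (X : Set (Rn n)) (Y : Set (Rn m)) (D : Set Q)
    (f : Rn n × Rn m → EReal) (g : Rn n × Rn m → ℝ) (H : Rn n × Rn m → Q)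
    (τ : ℝ) : EReal :=
  ⨅ (x : Rn n) (y : Rn m) (_ : PFeas X Y D g H τ x y), f (x, y)

/-- Optimal solution of (P): feasible, finite objective value attaining `𝔪`. -/
def POpt (X : Set (Rn n)) (Y : Set (Rn m)) (D : Set Q)
    (f : Rn n × Rn m → EReal) (g : Rn n × Rn m → ℝ) (H : Rn n × Rn m → Q)
    (τ : ℝ) (x : Rn n) (y : Rn m) : Prop :=
  PFeas X Y D g H τ x y ∧ f (x, y) ≠ ⊤ ∧ f (x, y) = PVal X Y D f g H τ

/-- Feasibility in the alternative problem (P)^ν with data `Yn, gn, Hn, lamBar, τn`. -/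
def PnuFeas (X : Set (Rn n)) (Y : Set (Rn m)) (D : Set Q) (Yn : Set (Rn m))
    (gn : Rn n × Rn m → ℝ) (Hn : Rn n × Rn m → Q) (lamBar τn : ℝ)
    (x : Rn n) (y : Rn m) (u : Q) (α lam : ℝ) : Prop :=
  x ∈ X ∧ y ∈ Y ∧ α ≤ 0 ∧ 0 ≤ lam ∧ lam ≤ lamBar ∧ Hn (x, y) + u ∈ D ∧
    ∀ z ∈ Yn, gn (x, y) + α ≤ gn (x, z) + lam * infDist (Hn (x, z)) D + τn

/-- Objective function of (P)^ν: `f^ν(x,y) + σ^ν ‖u‖ - θ^ν α`. -/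
def PnuObj (fn : Rn n × Rn m → EReal) (σn θn : ℝ)
    (x : Rn n) (y : Rn m) (u : Q) (α : ℝ) : EReal :=
  fn (x, y) + ((σn * ‖u‖ - θn * α : ℝ) : EReal)

/-- The minimum value `𝔪^ν` of (P)^ν. -/
def PnuVal (X : Set (Rn n)) (Y : Set (Rn m)) (D : Set Q) (Yn : Set (Rn m))
    (fn : Rn n × Rn m → EReal) (gn : Rn n × Rn m → ℝ) (Hn : Rn n × Rn m → Q)
    (σn θn lamBar τn : ℝ) : EReal :=
  ⨅ (x : Rn n) (y : Rn m) (u : Q) (α : ℝ) (lam : ℝ)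
    (_ : PnuFeas X Y D Yn gn Hn lamBar τn x y u α lam),
    PnuObj fn σn θn x y u α

/-- `ε`-optimal solution of (P)^ν: feasible with finite objective value at most `𝔪^ν + ε`. -/
def PnuEps (X : Set (Rn n)) (Y : Set (Rn m)) (D : Set Q) (Yn : Set (Rn m))
    (fn : Rn n × Rn m → EReal) (gn : Rn n × Rn m → ℝ) (Hn : Rn n × Rn m → Q)
    (σn θn lamBar τn ε : ℝ)
    (x : Rn n) (y : Rn m) (u : Q) (α lam : ℝ) : Prop :=
  PnuFeas X Y D Yn gn Hn lamBar τn x y u α lam ∧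
    PnuObj fn σn θn x y u α ≠ ⊤ ∧
    PnuObj fn σn θn x y u α ≤ PnuVal X Y D Yn fn gn Hn σn θn lamBar τn + (ε : EReal)

/-- The value function `V(x,u) = inf_{y ∈ Y} { g(x,y) | H(x,y) + u ∈ D }`. -/
def Vfun (Y : Set (Rn m)) (D : Set Q)
    (g : Rn n × Rn m → ℝ) (H : Rn n × Rn m → Q)
    (x : Rn n) (u : Q) : EReal :=
  ⨅ (y : Rn m) (_ : y ∈ Y ∧ H (x, y) + u ∈ D), (g (x, y) : EReal)

/-- The value function `V` is calm at `x` with penalty threshold `lam`. -/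
def CalmAtWith (Y : Set (Rn m)) (D : Set Q)
    (g : Rn n × Rn m → ℝ) (H : Rn n × Rn m → Q)
    (x : Rn n) (lam : ℝ) : Prop :=
  0 ≤ lam ∧ ∀ u : Q,
    Vfun Y D g H x 0 - ((lam * ‖u‖ : ℝ) : EReal) ≤ Vfun Y D g H x u

/-- The value function `V` is calm at `x`. -/
def CalmAt (Y : Set (Rn m)) (D : Set Q)
    (g : Rn n × Rn m → ℝ) (H : Rn n × Rn m → Q) (x : Rn n) : Prop :=
  ∃ lam : ℝ, CalmAtWith Y D g H x lam

/-- The value function `V` is locally calm at `xbar`. -/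
def LocallyCalmAt (Y : Set (Rn m)) (D : Set Q)
    (g : Rn n × Rn m → ℝ) (H : Rn n × Rn m → Q) (xbar : Rn n) : Prop :=
  ∃ lam ρ : ℝ, 0 ≤ lam ∧ 0 < ρ ∧
    ∀ x ∈ Metric.closedBall xbar ρ, ∀ u : Q,
      Vfun Y D g H x 0 - ((lam * ‖u‖ : ℝ) : EReal) ≤ Vfun Y D g H x u

/-- The penalty-based value function `μ(x,λ) = inf_{y ∈ S} [g(x,y) + λ dist(H(x,y), D)]`. -/
def muSet (S : Set (Rn m)) (D : Set Q)
    (g : Rn n × Rn m → ℝ) (H : Rn n × Rn m → Q)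
    (x : Rn n) (lam : ℝ) : EReal :=
  ⨅ (y : Rn m) (_ : y ∈ S), ((g (x, y) + lam * infDist (H (x, y)) D : ℝ) : EReal)

/-- The Basic Assumption (Assumption 2.1). -/
structure BasicAssumption (X : Set (Rn n)) (Y : Set (Rn m)) (D : Set Q)
    (Yν : ℕ → Set (Rn m))
    (f : Rn n × Rn m → EReal) (fν : ℕ → Rn n × Rn m → EReal)
    (g : Rn n × Rn m → ℝ) (gν : ℕ → Rn n × Rn m → ℝ)
    (H : Rn n × Rn m → Q) (Hν : ℕ → Rn n × Rn m → Q)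
    (σ θ lamBar τν δ η : ℕ → ℝ) : Prop where
  X_nonempty : X.Nonempty
  X_closed : IsClosed X
  Y_nonempty : Y.Nonempty
  Y_closed : IsClosed Y
  D_nonempty : D.Nonempty
  D_closed : IsClosed D
  Yν_nonempty : ∀ ν, (Yν ν).Nonempty
  Yν_subset : ∀ ν, Yν ν ⊆ Y
  Yν_conv : ∀ y : Rn m,
    Tendsto (fun ν => infDist y (Yν ν)) atTop (𝓝 (infDist y Y))
  δ_lim : Tendsto δ atTop (𝓝 0)
  g_err : ∀ ν, ∀ x ∈ X, ∀ y ∈ Y, |gν ν (x, y) - g (x, y)| ≤ δ ν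
  g_cont : ContinuousOn g (X ×ˢ Y)
  η_lim : Tendsto η atTop (𝓝 0)
  H_err : ∀ ν, ∀ x ∈ X, ∀ y ∈ Y,
    |infDist (Hν ν (x, y)) D - infDist (H (x, y)) D| ≤ η ν
  H_cont : ContinuousOn H (X ×ˢ Y)
  f_ne_bot : ∀ p, f p ≠ ⊥
  fν_ne_bot : ∀ ν p, fν ν p ≠ ⊥
  f_limsup : ∀ x ∈ X, ∀ y ∈ Y,
    limsup (fun ν => fν ν (x, y)) atTop ≤ f (x, y)
  f_liminf : ∀ x ∈ X, ∀ y ∈ Y, ∀ (xs : ℕ → Rn n) (ys : ℕ → Rn m),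
    (∀ ν, xs ν ∈ X) → (∀ ν, ys ν ∈ Y) →
    Tendsto xs atTop (𝓝 x) → Tendsto ys atTop (𝓝 y) →
    f (x, y) ≤ liminf (fun ν => fν ν (xs ν, ys ν)) atTop
  σ_nonneg : ∀ ν, 0 ≤ σ ν
  θ_nonneg : ∀ ν, 0 ≤ θ ν
  lamBar_nonneg : ∀ ν, 0 ≤ lamBar ν
  τν_nonneg : ∀ ν, 0 ≤ τν ν
  lamBar_top : Tendsto lamBar atTop atTop
  ση_lim : Tendsto (fun ν => σ ν * η ν) atTop (𝓝 0)
  θlamη_lim : Tendsto (fun ν => θ ν * lamBar ν * η ν) atTop (𝓝 0)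
  θδ_lim : Tendsto (fun ν => θ ν * δ ν) atTop (𝓝 0)

/-- Proposition 2.4: characterization of calmness at a point. For nonempty `D`,
the value function `V` is calm at `x` with penalty threshold `lam` if and only if
`inf_{y∈Y} [g(x,y) + lam·dist(H(x,y), D)] = inf_{y∈Y} { g(x,y) | H(x,y) ∈ D }`. -/
theorem calm_iff_exact_penalty
    [NormedSpace ℝ Q] [FiniteDimensional ℝ Q]
    (Y : Set (Rn m)) (D : Set Q)
    (g : Rn n × Rn m → ℝ) (H : Rn n × Rn m → Q)
    (hD : D.Nonempty) (x : Rn n) (lam : ℝ) (hlam : 0 ≤ lam) :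
    CalmAtWith Y D g H x lam ↔ muSet Y D g H x lam = Vfun Y D g H x 0 := by

  constructor
  · rintro ⟨-, hcalm⟩
    apply le_antisymm
    · -- muSet ≤ Vfun x 0
      refine le_iInf fun y => le_iInf fun hy => ?_
      calc muSet Y D g H x lam
          ≤ ((g (x, y) + lam * infDist (H (x, y)) D : ℝ) : EReal) :=
            iInf₂_le y hy.1
        _ = ((g (x, y) : ℝ) : EReal) := by
            rw [infDist_zero_of_mem (by simpa using hy.2)]; norm_num
    · -- Vfun x 0 ≤ muSet
      refine le_iInf fun y => le_iInf fun hy => ?_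
      refine le_of_forall_gt_imp_ge_of_dense fun c hc => ?_
      rcases EReal.lt_iff_exists_real_btwn.1 hc with ⟨s, hs1, hs2⟩
      have hε : (0:ℝ) < (s - (g (x, y) + lam * infDist (H (x, y)) D)) / (lam + 1) := by
        have : (g (x, y) + lam * infDist (H (x, y)) D : ℝ) < s := by
          exact_mod_cast hs1
        have hl1 : (0:ℝ) < lam + 1 := by linarith
        exact div_pos (by linarith) hl1
      set ε := (s - (g (x, y) + lam * infDist (H (x, y)) D)) / (lam + 1) with hεdef
      obtain ⟨a, haD, hdista⟩ := (infDist_lt_iff hD).1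
        (lt_add_of_pos_right (infDist (H (x, y)) D) hε)
      set u := a - H (x, y) with hu
      have hfeas : y ∈ Y ∧ H (x, y) + u ∈ D := ⟨hy, by simpa [hu] using haD⟩
      have h1 : Vfun Y D g H x u ≤ ((g (x, y) : ℝ) : EReal) := iInf₂_le y hfeas
      have h2 : Vfun Y D g H x 0 ≤ ((g (x, y) : ℝ) : EReal)
          + ((lam * ‖u‖ : ℝ) : EReal) := by
        have := hcalm u
        rw [EReal.sub_le_iff_le_add (.inl (EReal.coe_ne_bot _)) (.inl (EReal.coe_ne_top _))] at this
        exact this.trans (add_le_add_left h1 _)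
      have hnorm : ‖u‖ < infDist (H (x, y)) D + ε := by
        simpa [hu, dist_eq_norm, norm_sub_rev] using hdista
      have h3 : (g (x, y) : ℝ) + lam * ‖u‖ ≤ s := by
        have h4 : lam * ‖u‖ ≤ lam * (infDist (H (x, y)) D + ε) :=
          mul_le_mul_of_nonneg_left hnorm.le hlam
        have h5 : lam * ε ≤ (lam + 1) * ε := by nlinarith [hε.le]
        have h6 : (lam + 1) * ε = s - (g (x, y) + lam * infDist (H (x, y)) D) := by
          rw [hεdef]; field_simp [show (lam + 1) ≠ 0 by linarith]
        nlinarith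
      calc Vfun Y D g H x 0 ≤ ((g (x, y) + lam * ‖u‖ : ℝ) : EReal) := by
            rw [EReal.coe_add]; exact h2
        _ ≤ (s : EReal) := by exact_mod_cast h3
        _ ≤ c := hs2.le
  · rintro heq
    refine ⟨hlam, fun u => ?_⟩
    refine le_iInf fun y => le_iInf fun hy => ?_
    rw [EReal.sub_le_iff_le_add (.inl (EReal.coe_ne_bot _)) (.inl (EReal.coe_ne_top _))]
    have hd : infDist (H (x, y)) D ≤ ‖u‖ := by
      have := infDist_le_dist_of_mem (x := H (x, y)) hy.2
      simpa [dist_eq_norm] using this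
    calc Vfun Y D g H x 0 = muSet Y D g H x lam := heq.symm
      _ ≤ ((g (x, y) + lam * infDist (H (x, y)) D : ℝ) : EReal) := iInf₂_le y hy.1
      _ ≤ ((g (x, y) : ℝ) : EReal) + ((lam * ‖u‖ : ℝ) : EReal) := by
          rw [← EReal.coe_add]
          exact_mod_cast add_le_add_right (mul_le_mul_of_nonneg_left hd hlam) _
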